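/- For the logistic loss ℓ(z) = ln(1+e^z) and ψ(ξ) = ℓ^{-1}(∑_i ℓ(ξ_i)), for any ξ ∈ ℝⁿ the gradient ∇ψ(ξ) with coordinates ℓ'(ξ_i)/ℓ'(ψ(ξ)) satisfies ‖∇ψ(ξ)‖₁ ≥ 1. -/

import Mathlib

lemma subadd_aux {α : Type*} (s : Finset α) (L : α → ℝ) (hL : ∀ i, 0 ≤ L i) :
    1 - Real.exp (-(∑ i ∈ s, L i)) ≤ ∑ i ∈ s, (1 - Real.exp (-(L i))) := by
  classical
  induction s using Finset.induction with
  | empty => simp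
  | insert a s hx ih =>
    rw [Finset.sum_insert hx, Finset.sum_insert hx]
    have h1 : Real.exp (-(L a)) ≤ 1 := Real.exp_le_one_iff.mpr (by linarith [hL a])
    have h2 : Real.exp (-(∑ i ∈ s, L i)) ≤ 1 :=
      Real.exp_le_one_iff.mpr (by
        have : 0 ≤ ∑ i ∈ s, L i := Finset.sum_nonneg fun i _ => hL i
        linarith)
    have key : 1 - Real.exp (-(L a + ∑ i ∈ s, L i)) ≤
        (1 - Real.exp (-(L a))) + (1 - Real.exp (-(∑ i ∈ s, L i)))  := by
      rw [show -(L a + ∑ i ∈ s, L i) = -(L a) + -(∑ i ∈ s, L i) by ring, Real.exp_add]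
      nlinarith [Real.exp_pos (-(L a)), Real.exp_pos (-(∑ i ∈ s, L i))]
    linarith [key, ih]

/-- For the logistic loss `ℓ(z) = ln(1+e^z)` and `ψ(ξ) = ℓ⁻¹(∑ᵢ ℓ(ξᵢ))`,
for any `ξ` the gradient `∇ψ(ξ)`, with coordinates
`(1 − e^{−ℓ(ξᵢ)}) / (1 − e^{−∑ⱼ ℓ(ξⱼ)})`, has ℓ₁ norm at least 1. -/
theorem stmt_5 {n : ℕ} (hn : 0 < n) (ξ : Fin n → ℝ)
    (q : Fin n → ℝ)
    (hq : ∀ i, q i = (1 - Real.exp (-(Real.log (1 + Real.exp (ξ i))))) /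
        (1 - Real.exp (-(∑ j, Real.log (1 + Real.exp (ξ j)))))) :
    1 ≤ ∑ i, |q i| := by
  set L : Fin n → ℝ := fun i => Real.log (1 + Real.exp (ξ i)) with hLdef
  have hLpos : ∀ i, 0 < L i := fun i =>
    Real.log_pos (by linarith [Real.exp_pos (ξ i)])
  have hSpos : 0 < ∑ j, L j := by
    have : Nonempty (Fin n) := ⟨⟨0, hn⟩⟩
    exact Finset.sum_pos (fun i _ => hLpos i) Finset.univ_nonempty
  have hd : 0 < 1 - Real.exp (-(∑ j, L j)) := by
    have : Real.exp (-(∑ j, L j)) < 1 := Real.exp_lt_one_iff.mpr (by linarith)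
    linarith
  have hqnn : ∀ i, 0 ≤ q i := by
    intro i
    rw [hq i]
    apply div_nonneg _ hd.le
    have : Real.exp (-(L i)) ≤ 1 := Real.exp_le_one_iff.mpr (by linarith [hLpos i])
    linarith
  have hsum : ∑ i, |q i| = (∑ i, (1 - Real.exp (-(L i)))) / (1 - Real.exp (-(∑ j, L j))) := by
    rw [Finset.sum_div]
    exact Finset.sum_congr rfl fun i _ => by rw [abs_of_nonneg (hqnn i), hq i]
  rw [hsum, le_div_iff₀ hd, one_mul]
  exact subadd_aux Finset.univ L fun i => (hLpos i).le
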